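/- Integrated information Gamma operator as a drift-Jacobian form (key step in the proof of Proposition 3.4): let f : ℝ^d → ℝ be smooth with compact support and set p := π·e^f. Then ∫_{ℝ^d} Γ_I(f,f)(x) p(x) dx = −∫_{ℝ^d} Σ_{i,j} ∂γ_j/∂x_i(x) · ∂f/∂x_i(x) · ∂f/∂x_j(x) · p(x) dx. -/

import Mathlib

open MeasureTheory
open scoped BigOperators

noncomputable section

/-- `i`-th partial derivative of `f` at `x`, in the coordinate direction `i`. -/
def pderiv' {d : ℕ} (f : EuclideanSpace ℝ (Fin d) → ℝ) (i : Fin d)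
    (x : EuclideanSpace ℝ (Fin d)) : ℝ :=
  fderiv ℝ f x (EuclideanSpace.single i 1)

/-- second partial derivative `∂_i ∂_j f` at `x`. -/
def pderiv2 {d : ℕ} (f : EuclideanSpace ℝ (Fin d) → ℝ) (i j : Fin d)
    (x : EuclideanSpace ℝ (Fin d)) : ℝ :=
  pderiv' (fun y => pderiv' f j y) i x

/-- Laplacian `Δf`. -/
def lap {d : ℕ} (f : EuclideanSpace ℝ (Fin d) → ℝ) (x : EuclideanSpace ℝ (Fin d)) : ℝ :=
  ∑ i, pderiv2 f i i x

/-- carré du champ `Γ₁(g,h) = ⟨∇g, ∇h⟩`. -/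
def Gamma1 {d : ℕ} (g h : EuclideanSpace ℝ (Fin d) → ℝ) (x : EuclideanSpace ℝ (Fin d)) : ℝ :=
  ∑ i, pderiv' g i x * pderiv' h i x

/-- generator `L̃ h = ⟨∇ log π, ∇h⟩ + Δh`. -/
def genL {d : ℕ} (π h : EuclideanSpace ℝ (Fin d) → ℝ) (x : EuclideanSpace ℝ (Fin d)) : ℝ :=
  Gamma1 (fun y => Real.log (π y)) h x + lap h x

/-- Gamma two operator `Γ₂(f,f) = ½ L̃ Γ₁(f,f) − Γ₁(L̃f, f)`. -/
def Gamma2 {d : ℕ} (π f : EuclideanSpace ℝ (Fin d) → ℝ) (x : EuclideanSpace ℝ (Fin d)) : ℝ :=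
  (1/2 : ℝ) * genL π (fun y => Gamma1 f f y) x - Gamma1 (fun y => genL π f y) f x

/-- information Gamma operator `Γ_I(f,f) = −½⟨γ, ∇Γ₁(f,f)⟩ + (L̃f)·⟨∇f, γ⟩`. -/
def GammaI {d : ℕ} (π : EuclideanSpace ℝ (Fin d) → ℝ)
    (γ : EuclideanSpace ℝ (Fin d) → EuclideanSpace ℝ (Fin d))
    (f : EuclideanSpace ℝ (Fin d) → ℝ) (x : EuclideanSpace ℝ (Fin d)) : ℝ :=
  -(1/2 : ℝ) * (∑ i, γ x i * pderiv' (fun y => Gamma1 f f y) i x)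
    + genL π f x * (∑ i, pderiv' f i x * γ x i)

/-- the tensor `ℜ` of the paper:
`ℜ_{ij} = −∂²_{ij} log π + ((3−2d)/8) γ_i γ_j − (1/8) δ_{ij} Σ_k γ_k²
          + ½(γ_i ∂_j log π + γ_j ∂_i log π)`. -/
def Rtensor {d : ℕ} (π : EuclideanSpace ℝ (Fin d) → ℝ)
    (γ : EuclideanSpace ℝ (Fin d) → EuclideanSpace ℝ (Fin d))
    (i j : Fin d) (x : EuclideanSpace ℝ (Fin d)) : ℝ :=
  -pderiv2 (fun y => Real.log (π y)) i j x
    + ((3 - 2 * (d : ℝ)) / 8) * γ x i * γ x j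
    - (1/8 : ℝ) * (if i = j then ∑ k, (γ x k) ^ 2 else 0)
    + (1/2 : ℝ) * (γ x i * pderiv' (fun y => Real.log (π y)) j x
        + γ x j * pderiv' (fun y => Real.log (π y)) i x)

/-- the modified Hessian matrix `𝔥ess f`. -/
def hessM {d : ℕ} (γ : EuclideanSpace ℝ (Fin d) → EuclideanSpace ℝ (Fin d))
    (f : EuclideanSpace ℝ (Fin d) → ℝ) (i j : Fin d) (x : EuclideanSpace ℝ (Fin d)) : ℝ :=
  if i = j then
    pderiv2 f i i x + (1/2 : ℝ) * (∑ k, γ x k * pderiv' f k x)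
      - (1/2 : ℝ) * γ x i * pderiv' f i x
  else
    pderiv2 f i j x - (1/4 : ℝ) * (γ x i * pderiv' f j x + γ x j * pderiv' f i x)

/-- right-hand side of the Fokker–Planck equation `−∇·(p b) + Δp` with drift
`b = ∇ log π − γ`, evaluated at a density `p`. -/
def FPrhs {d : ℕ} (π : EuclideanSpace ℝ (Fin d) → ℝ)
    (γ : EuclideanSpace ℝ (Fin d) → EuclideanSpace ℝ (Fin d))
    (p : EuclideanSpace ℝ (Fin d) → ℝ) (x : EuclideanSpace ℝ (Fin d)) : ℝ :=
  -(∑ i, pderiv' (fun y => p y * (pderiv' (fun z => Real.log (π z)) i y - γ y i)) i x)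
    + lap p x

/-- `L̃* p = −∇·(p ∇ log π) + Δp`. -/
def Ltilstar {d : ℕ} (π p : EuclideanSpace ℝ (Fin d) → ℝ)
    (x : EuclideanSpace ℝ (Fin d)) : ℝ :=
  -(∑ i, pderiv' (fun y => p y * pderiv' (fun z => Real.log (π z)) i y) i x) + lap p x

/-- Arnold–Carlen tensor `(ℜ_AC)_{ij} = −∂²_{ij} log π − ½(∂_i γ_j + ∂_j γ_i)`. -/
def RAC {d : ℕ} (π : EuclideanSpace ℝ (Fin d) → ℝ)
    (γ : EuclideanSpace ℝ (Fin d) → EuclideanSpace ℝ (Fin d))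
    (i j : Fin d) (x : EuclideanSpace ℝ (Fin d)) : ℝ :=
  -pderiv2 (fun y => Real.log (π y)) i j x
    - (1/2 : ℝ) * (pderiv' (fun y => γ y j) i x + pderiv' (fun y => γ y i) j x)


namespace Aux
variable {d : ℕ}
local notation "𝔼" => EuclideanSpace ℝ (Fin d)

lemma diffat {f : 𝔼 → ℝ} (hf : ContDiff ℝ (⊤ : ℕ∞) f) (x : 𝔼) : DifferentiableAt ℝ f x :=
  (hf.differentiable (by simp)).differentiableAt

lemma contDiff_pderiv' {f : 𝔼 → ℝ} (hf : ContDiff ℝ (⊤ : ℕ∞) f) (i : Fin d) :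
    ContDiff ℝ (⊤ : ℕ∞) (fun x => pderiv' f i x) :=
  (hf.fderiv_right (by exact_mod_cast le_top)).clm_apply contDiff_const

lemma hcs_pderiv' {f : 𝔼 → ℝ} (hf : HasCompactSupport f) (i : Fin d) :
    HasCompactSupport (fun x => pderiv' f i x) :=
  hf.fderiv_apply ℝ _

lemma hcs_mul_left {u v : 𝔼 → ℝ} (h : HasCompactSupport v) :
    HasCompactSupport (fun x => u x * v x) := h.mul_left

lemma hcs_mul_right {u v : 𝔼 → ℝ} (h : HasCompactSupport u) :
    HasCompactSupport (fun x => u x * v x) := h.mul_right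

lemma hcs_sum {ι : Type*} (s : Finset ι) (F : ι → 𝔼 → ℝ)
    (h : ∀ j ∈ s, HasCompactSupport (F j)) :
    HasCompactSupport (fun x => ∑ j ∈ s, F j x) := by
  classical
  induction s using Finset.induction_on with
  | empty => simp only [Finset.sum_empty]; rw [hasCompactSupport_def]; simp
  | @insert a s ha ih =>
      simp only [Finset.sum_insert ha]
      exact (h a (Finset.mem_insert_self a s)).add
        (ih fun j hj => h j (Finset.mem_insert_of_mem hj))

lemma contDiff_coord {γ : 𝔼 → 𝔼} (hγ : ContDiff ℝ (⊤ : ℕ∞) γ) (i : Fin d) :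
    ContDiff ℝ (⊤ : ℕ∞) (fun x => γ x i) :=
  (EuclideanSpace.proj (𝕜 := ℝ) i).contDiff.comp hγ

lemma pderiv'_mul {a b : 𝔼 → ℝ} {x : 𝔼} (ha : DifferentiableAt ℝ a x)
    (hb : DifferentiableAt ℝ b x) (i : Fin d) :
    pderiv' (fun y => a y * b y) i x = pderiv' a i x * b x + a x * pderiv' b i x := by
  unfold pderiv'
  rw [fderiv_fun_mul ha hb]
  simp [mul_comm, add_comm]

lemma pderiv'_sum {ι : Type*} {s : Finset ι} {F : ι → 𝔼 → ℝ} {x : 𝔼}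
    (h : ∀ j ∈ s, DifferentiableAt ℝ (F j) x) (i : Fin d) :
    pderiv' (fun y => ∑ j ∈ s, F j y) i x = ∑ j ∈ s, pderiv' (F j) i x := by
  unfold pderiv'
  rw [fderiv_fun_sum h]
  simp

lemma pderiv'_exp {f : 𝔼 → ℝ} {x : 𝔼} (hf : DifferentiableAt ℝ f x) (i : Fin d) :
    pderiv' (fun y => Real.exp (f y)) i x = Real.exp (f x) * pderiv' f i x := by
  unfold pderiv'
  rw [fderiv_exp hf]
  simp

lemma pderiv'_log {f : 𝔼 → ℝ} {x : 𝔼} (hf : DifferentiableAt ℝ f x) (hx : f x ≠ 0) (i : Fin d) :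
    pderiv' (fun y => Real.log (f y)) i x = pderiv' f i x / f x := by
  unfold pderiv'
  rw [(hf.hasFDerivAt.log hx).fderiv]
  simp [div_eq_inv_mul]

lemma pderiv2_symm {f : 𝔼 → ℝ} (hf : ContDiff ℝ (⊤ : ℕ∞) f) (i j : Fin d) (x : 𝔼) :
    pderiv2 f i j x = pderiv2 f j i x := by
  have hd2 : ∀ (k l : Fin d),
      pderiv2 f k l x = fderiv ℝ (fderiv ℝ f) x (EuclideanSpace.single k 1)
        (EuclideanSpace.single l 1) := by
    intro k l
    unfold pderiv2 pderiv'
    rw [fderiv_clm_apply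
      (((hf.fderiv_right (m := (⊤:ℕ∞)) (by exact_mod_cast le_top)).differentiable
          (by simp)).differentiableAt)
      (differentiableAt_const _)]
    simp
  rw [hd2, hd2]
  exact (hf.contDiffAt.isSymmSndFDerivAt (by
    rw [show ((2:WithTop ℕ∞)) = ((2:ℕ∞) : WithTop ℕ∞) from rfl]
    simp
    exact WithTop.coe_le_coe.mpr (le_top : (2:ℕ∞) ≤ ⊤))) _ _


lemma integ {g : 𝔼 → ℝ} (hg : Continuous g) (hgc : HasCompactSupport g) :
    Integrable g (volume : Measure 𝔼) :=
  hg.integrable_of_hasCompactSupport hgc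

lemma ibp {u v : 𝔼 → ℝ} (hu : ContDiff ℝ (⊤ : ℕ∞) u) (hv : ContDiff ℝ (⊤ : ℕ∞) v)
    (hc : HasCompactSupport v) (i : Fin d) :
    ∫ x, u x * pderiv' v i x = -∫ x, pderiv' u i x * v x :=
  integral_mul_fderiv_eq_neg_fderiv_mul_of_integrable
    (integ ((contDiff_pderiv' hu i).continuous.mul hv.continuous) (hcs_mul_left hc))
    (integ (hu.continuous.mul (contDiff_pderiv' hv i).continuous)
      (hcs_mul_left (hcs_pderiv' hc i)))
    (integ (hu.continuous.mul hv.continuous) (hcs_mul_left hc))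
    (fun x _ => (hu.differentiable (by simp)).differentiableAt) (fun x _ => (hv.differentiable (by simp)).differentiableAt)

lemma ibp' {u v : 𝔼 → ℝ} (hu : ContDiff ℝ (⊤ : ℕ∞) u) (hv : ContDiff ℝ (⊤ : ℕ∞) v)
    (hc : HasCompactSupport u) (i : Fin d) :
    ∫ x, u x * pderiv' v i x = -∫ x, pderiv' u i x * v x := by
  have h := ibp hv hu hc i
  have e1 : (fun x => v x * pderiv' u i x) = fun x => pderiv' u i x * v x := by
    funext x; ring
  have e2 : (fun x => pderiv' v i x * u x) = fun x => u x * pderiv' v i x := by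
    funext x; ring
  rw [e1, e2] at h
  linarith


lemma stat_ibp (π : 𝔼 → ℝ) (hπ : ContDiff ℝ (⊤ : ℕ∞) π)
    (γ : 𝔼 → 𝔼) (hγ : ContDiff ℝ (⊤ : ℕ∞) γ)
    (hstat : ∀ x : 𝔼, ∑ i, pderiv' (fun y => π y * γ y i) i x = 0)
    (f : 𝔼 → ℝ) (hf : ContDiff ℝ (⊤ : ℕ∞) f)
    (g : 𝔼 → ℝ) (hg : ContDiff ℝ (⊤ : ℕ∞) g) (hgc : HasCompactSupport g) :
    ∫ x, (∑ i, γ x i * pderiv' g i x) * (π x * Real.exp (f x))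
      = -∫ x, g x * ((∑ j, pderiv' f j x * γ x j) * (π x * Real.exp (f x))) := by
  set p : 𝔼 → ℝ := fun x => π x * Real.exp (f x) with hpdef
  have hp : ContDiff ℝ (⊤ : ℕ∞) p := hπ.mul hf.exp
  set u : Fin d → 𝔼 → ℝ := fun i x => γ x i * p x with hudef
  have hu : ∀ i, ContDiff ℝ (⊤ : ℕ∞) (u i) := fun i => (contDiff_coord hγ i).mul hp
  have step1 : (fun x => (∑ i, γ x i * pderiv' g i x) * p x)
      = fun x => ∑ i, u i x * pderiv' g i x := by
    funext x
    rw [Finset.sum_mul]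
    exact Finset.sum_congr rfl fun i _ => by simp only [hudef]; ring
  rw [step1]
  rw [integral_finset_sum (f := fun i x => u i x * pderiv' g i x) _ (fun i _ => integ
    (((hu i).continuous).mul (contDiff_pderiv' hg i).continuous)
    (hcs_mul_left (hcs_pderiv' hgc i)))]
  have step2 : ∀ i : Fin d, ∫ x, u i x * pderiv' g i x = -∫ x, pderiv' (u i) i x * g x :=
    fun i => ibp (hu i) hg hgc i
  rw [Finset.sum_congr rfl fun i _ => step2 i, Finset.sum_neg_distrib]
  rw [← integral_finset_sum (f := fun i x => pderiv' (u i) i x * g x) _ (fun i _ => integ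
    ((contDiff_pderiv' (hu i) i).continuous.mul hg.continuous) (hcs_mul_left hgc))]
  have key : (fun x => ∑ i, pderiv' (u i) i x * g x)
      = fun x => g x * ((∑ j, pderiv' f j x * γ x j) * (π x * Real.exp (f x))) := by
    funext x
    have hdu : ∀ i : Fin d, pderiv' (u i) i x
        = pderiv' (fun y => γ y i) i x * p x
          + γ x i * (pderiv' π i x * Real.exp (f x)
            + π x * (Real.exp (f x) * pderiv' f i x)) := by
      intro i
      have h1 := pderiv'_mul (diffat (contDiff_coord hγ i) x) (diffat hp x) i
      have h2 := pderiv'_mul (diffat hπ x) (diffat hf.exp x) i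
      rw [pderiv'_exp (diffat hf x) i] at h2
      rw [hudef]
      simp only at h1
      rw [h1, hpdef]
      simp only
      rw [h2]
    have hst := hstat x
    have hst' : ∑ i, (pderiv' π i x * γ x i + π x * pderiv' (fun y => γ y i) i x) = 0 := by
      rw [← hst]
      exact Finset.sum_congr rfl fun i _ =>
        (pderiv'_mul (diffat hπ x) (diffat (contDiff_coord hγ i) x) i).symm
    calc ∑ i, pderiv' (u i) i x * g x
        = ∑ i, (Real.exp (f x) * (pderiv' π i x * γ x i + π x * pderiv' (fun y => γ y i) i x)
            + (pderiv' f i x * γ x i) * p x) * g x := by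
          refine Finset.sum_congr rfl fun i _ => ?_
          rw [hdu i, hpdef]; ring
      _ = (∑ i, Real.exp (f x) * (pderiv' π i x * γ x i + π x * pderiv' (fun y => γ y i) i x)
            + ∑ i, (pderiv' f i x * γ x i) * p x) * g x := by
          rw [← Finset.sum_add_distrib, ← Finset.sum_mul]
      _ = g x * ((∑ j, pderiv' f j x * γ x j) * p x) := by
          rw [← Finset.mul_sum, hst', ← Finset.sum_mul]
          ring
  rw [key]

end Aux

open Aux

/-- Key step in the proof of Proposition 3.4, with `p = π e^f`:
`∫ Γ_I(f,f) p = −∫ ∇γ(∇f, ∇f) p`. -/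
theorem integrated_gamma_I_drift_jacobian
    (d : ℕ) (hd : 1 ≤ d)
    (π : EuclideanSpace ℝ (Fin d) → ℝ) (hπ : ContDiff ℝ (⊤ : ℕ∞) π)
    (hπpos : ∀ x, 0 < π x)
    (γ : EuclideanSpace ℝ (Fin d) → EuclideanSpace ℝ (Fin d))
    (hγ : ContDiff ℝ (⊤ : ℕ∞) γ)
    (hstat : ∀ x, ∑ i, pderiv' (fun y => π y * γ y i) i x = 0)
    (f : EuclideanSpace ℝ (Fin d) → ℝ) (hf : ContDiff ℝ (⊤ : ℕ∞) f)
    (hfc : HasCompactSupport f) :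
    ∫ x, GammaI π γ f x * (π x * Real.exp (f x)) =
      -∫ x, (∑ i, ∑ j, pderiv' (fun y => γ y j) i x * pderiv' f i x * pderiv' f j x)
          * (π x * Real.exp (f x)) := by
  classical
  have hπ0 : ∀ x, π x ≠ 0 := fun x => (hπpos x).ne'
  have hP : ContDiff ℝ (⊤ : ℕ∞) (fun x => π x * Real.exp (f x)) := hπ.mul hf.exp
  have hφ : ContDiff ℝ (⊤ : ℕ∞) (fun x => ∑ j, pderiv' f j x * γ x j) :=
    ContDiff.sum fun j _ => (contDiff_pderiv' hf j).mul (contDiff_coord hγ j)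
  have cφ : HasCompactSupport (fun x => ∑ j, pderiv' f j x * γ x j) :=
    hcs_sum _ _ fun j _ => hcs_mul_right (hcs_pderiv' hfc j)
  have hG : ContDiff ℝ (⊤ : ℕ∞) (fun x => Gamma1 f f x) := by
    simp only [Gamma1]
    exact ContDiff.sum fun i _ => (contDiff_pderiv' hf i).mul (contDiff_pderiv' hf i)
  have cG : HasCompactSupport (fun x => Gamma1 f f x) := by
    simp only [Gamma1]
    exact hcs_sum _ _ fun i _ => hcs_mul_right (hcs_pderiv' hfc i)
  have hH : ∀ i j : Fin d, ContDiff ℝ (⊤ : ℕ∞) (fun x => pderiv2 f i j x) :=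
    fun i j => contDiff_pderiv' (contDiff_pderiv' hf j) i
  have cH : ∀ i j : Fin d, HasCompactSupport (fun x => pderiv2 f i j x) :=
    fun i j => hcs_pderiv' (hcs_pderiv' hfc j) i
  have hgl : ContDiff ℝ (⊤ : ℕ∞) (fun x => Real.log (π x)) := hπ.log hπ0
  have hgenL : ContDiff ℝ (⊤ : ℕ∞) (fun x => genL π f x) := by
    simp only [genL, Gamma1, lap]
    exact (ContDiff.sum fun i _ => (contDiff_pderiv' hgl i).mul (contDiff_pderiv' hf i)).add
      (ContDiff.sum fun i _ => hH i i)
  have hDv : ∀ i : Fin d, ContDiff ℝ (⊤ : ℕ∞)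
      (fun y => (π y * Real.exp (f y)) * pderiv' f i y) :=
    fun i => hP.mul (contDiff_pderiv' hf i)
  have cDv : ∀ i : Fin d, HasCompactSupport
      (fun y => (π y * Real.exp (f y)) * pderiv' f i y) :=
    fun i => hcs_mul_left (hcs_pderiv' hfc i)
  have hD : ∀ i : Fin d, ContDiff ℝ (⊤ : ℕ∞) (fun x => pderiv' (fun y => (π y * Real.exp (f y)) * pderiv' f i y) i x) :=
    fun i => contDiff_pderiv' (hDv i) i
  have cD : ∀ i : Fin d, HasCompactSupport (fun x => pderiv' (fun y => (π y * Real.exp (f y)) * pderiv' f i y) i x) :=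
    fun i => hcs_pderiv' (cDv i) i
  -- pointwise identities
  have hlog : ∀ (x : EuclideanSpace ℝ (Fin d)) (i : Fin d),
      pderiv' (fun y => Real.log (π y)) i x = pderiv' π i x / π x :=
    fun x i => pderiv'_log (diffat hπ x) (hπ0 x) i
  have egen : ∀ x, (∑ i, pderiv' (fun y => (π y * Real.exp (f y)) * pderiv' f i y) i x)
      = genL π f x * (π x * Real.exp (f x)) + Gamma1 f f x * (π x * Real.exp (f x)) := by
    intro x
    have hDi : ∀ i : Fin d, pderiv' (fun y => (π y * Real.exp (f y)) * pderiv' f i y) i x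
        = (pderiv' π i x * Real.exp (f x) + π x * (Real.exp (f x) * pderiv' f i x))
            * pderiv' f i x + (π x * Real.exp (f x)) * pderiv2 f i i x := by
      intro i
      have h1 : pderiv' (fun y => (π y * Real.exp (f y)) * pderiv' f i y) i x
          = pderiv' (fun y => π y * Real.exp (f y)) i x * pderiv' f i x
            + (π x * Real.exp (f x)) * pderiv2 f i i x :=
        pderiv'_mul (diffat hP x) (diffat (contDiff_pderiv' hf i) x) i
      have h2 : pderiv' (fun y => π y * Real.exp (f y)) i x
          = pderiv' π i x * Real.exp (f x) + π x * (Real.exp (f x) * pderiv' f i x) := by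
        have := pderiv'_mul (diffat hπ x) (diffat hf.exp x) i
        rwa [pderiv'_exp (diffat hf x) i] at this
      rw [h1, h2]
    simp only [hDi, genL, Gamma1, lap, hlog]
    have hπx := hπ0 x
    calc ∑ i, ((pderiv' π i x * Real.exp (f x) + π x * (Real.exp (f x) * pderiv' f i x))
            * pderiv' f i x + (π x * Real.exp (f x)) * pderiv2 f i i x)
        = ∑ i, ((pderiv' π i x / π x * pderiv' f i x) * (π x * Real.exp (f x))
            + (pderiv' f i x * pderiv' f i x) * (π x * Real.exp (f x)) + pderiv2 f i i x * (π x * Real.exp (f x))) := by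
          refine Finset.sum_congr rfl fun i _ => ?_
          field_simp
      _ = (∑ i, pderiv' π i x / π x * pderiv' f i x) * (π x * Real.exp (f x))
            + (∑ i, pderiv' f i x * pderiv' f i x) * (π x * Real.exp (f x))
            + (∑ i, pderiv2 f i i x) * (π x * Real.exp (f x)) := by
          rw [Finset.sum_add_distrib, Finset.sum_add_distrib, ← Finset.sum_mul,
            ← Finset.sum_mul, ← Finset.sum_mul]
      _ = (∑ i, pderiv' π i x / π x * pderiv' f i x + ∑ i, pderiv2 f i i x) * (π x * Real.exp (f x))
            + (∑ i, pderiv' f i x * pderiv' f i x) * (π x * Real.exp (f x)) := by ring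
  have ephi : ∀ (x : EuclideanSpace ℝ (Fin d)) (i : Fin d), pderiv' (fun y => ∑ j, pderiv' f j y * γ y j) i x
      = ∑ j, (pderiv2 f i j x * γ x j + pderiv' f j x * pderiv' (fun y => γ y j) i x) := by
    intro x i
    have h1 : pderiv' (fun y => ∑ j, pderiv' f j y * γ y j) i x
        = ∑ j, pderiv' (fun y => pderiv' f j y * γ y j) i x :=
      pderiv'_sum (fun j _ => ((contDiff_pderiv' hf j).mul (contDiff_coord hγ j)).differentiable
        (by simp) x) i
    rw [h1]
    refine Finset.sum_congr rfl fun j _ => ?_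
    exact pderiv'_mul (diffat (contDiff_pderiv' hf j) x) (diffat (contDiff_coord hγ j) x) i
  have eHG : ∀ x, (∑ i, γ x i * pderiv' (fun y => Gamma1 f f y) i x)
      = 2 * ∑ i, ∑ j, pderiv2 f i j x * γ x j * pderiv' f i x := by
    intro x
    have hgj : ∀ j : Fin d, pderiv' (fun y => Gamma1 f f y) j x
        = ∑ i, 2 * (pderiv' f i x * pderiv2 f i j x) := by
      intro j
      have h1 : pderiv' (fun y => Gamma1 f f y) j x
          = ∑ i, pderiv' (fun y => pderiv' f i y * pderiv' f i y) j x := by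
        have : pderiv' (fun y => Gamma1 f f y) j x
            = pderiv' (fun y => ∑ i, pderiv' f i y * pderiv' f i y) j x := by
          simp only [Gamma1]
        rw [this]
        exact pderiv'_sum (fun i _ =>
          ((contDiff_pderiv' hf i).mul (contDiff_pderiv' hf i)).differentiable
            (by simp) x) j
      rw [h1]
      refine Finset.sum_congr rfl fun i _ => ?_
      have h2 : pderiv' (fun y => pderiv' f i y * pderiv' f i y) j x
          = pderiv2 f j i x * pderiv' f i x + pderiv' f i x * pderiv2 f j i x :=
        pderiv'_mul (diffat (contDiff_pderiv' hf i) x) (diffat (contDiff_pderiv' hf i) x) j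
      rw [h2, pderiv2_symm hf j i x]
      ring
    calc ∑ i, γ x i * pderiv' (fun y => Gamma1 f f y) i x
        = ∑ j, ∑ i, 2 * (pderiv2 f i j x * γ x j * pderiv' f i x) := by
          refine Finset.sum_congr rfl fun j _ => ?_
          rw [hgj j, Finset.mul_sum]
          exact Finset.sum_congr rfl fun i _ => by ring
      _ = ∑ i, ∑ j, 2 * (pderiv2 f i j x * γ x j * pderiv' f i x) := Finset.sum_comm
      _ = 2 * ∑ i, ∑ j, pderiv2 f i j x * γ x j * pderiv' f i x := by
          rw [Finset.mul_sum]
          exact Finset.sum_congr rfl fun i _ => by rw [Finset.mul_sum]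
  -- integrability
  have intA : Integrable (fun x => (∑ i, γ x i * pderiv' (fun y => Gamma1 f f y) i x) * (π x * Real.exp (f x))) :=
    integ ((continuous_finset_sum _ fun i _ => (contDiff_coord hγ i).continuous.mul
        (contDiff_pderiv' hG i).continuous).mul hP.continuous)
      (hcs_mul_right (hcs_sum _ _ fun i _ => hcs_mul_left (hcs_pderiv' cG i)))
  have intB : Integrable (fun x => genL π f x * ((∑ j, pderiv' f j x * γ x j) * (π x * Real.exp (f x)))) :=
    integ (hgenL.continuous.mul (hφ.continuous.mul hP.continuous))
      (hcs_mul_left (hcs_mul_right cφ))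
  have intGphiP : Integrable (fun x => Gamma1 f f x * ((∑ j, pderiv' f j x * γ x j) * (π x * Real.exp (f x)))) :=
    integ (hG.continuous.mul (hφ.continuous.mul hP.continuous))
      (hcs_mul_right cG)
  have intD : Integrable (fun x => (∑ i, pderiv' (fun y => (π y * Real.exp (f y)) * pderiv' f i y) i x) * (∑ j, pderiv' f j x * γ x j)) :=
    integ ((continuous_finset_sum _ fun i _ => (hD i).continuous).mul hφ.continuous)
      (hcs_mul_left cφ)
  have intphiD : ∀ i : Fin d, Integrable (fun x => (∑ j, pderiv' f j x * γ x j) * pderiv' (fun y => (π y * Real.exp (f y)) * pderiv' f i y) i x) :=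
    fun i => integ (hφ.continuous.mul (hD i).continuous) (hcs_mul_right cφ)
  have intdphi : ∀ i : Fin d, Integrable
      (fun x => pderiv' (fun y => ∑ j, pderiv' f j y * γ y j) i x * ((π x * Real.exp (f x)) * pderiv' f i x)) :=
    fun i => integ ((contDiff_pderiv' hφ i).continuous.mul
        (hP.continuous.mul (contDiff_pderiv' hf i).continuous))
      (hcs_mul_left (hcs_mul_left (hcs_pderiv' hfc i)))
  have intK : Integrable (fun x => (∑ i, ∑ j, pderiv2 f i j x * γ x j * pderiv' f i x) * (π x * Real.exp (f x))) :=
    integ ((continuous_finset_sum _ fun i _ => continuous_finset_sum _ fun j _ =>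
        ((hH i j).continuous.mul (contDiff_coord hγ j).continuous).mul
          (contDiff_pderiv' hf i).continuous).mul hP.continuous)
      (hcs_mul_right (hcs_sum _ _ fun i _ => hcs_sum _ _ fun j _ =>
        hcs_mul_left (hcs_pderiv' hfc i)))
  have intT : Integrable (fun x => (∑ i, ∑ j, pderiv' (fun y => γ y j) i x * pderiv' f i x * pderiv' f j x) * (π x * Real.exp (f x))) :=
    integ ((continuous_finset_sum _ fun i _ => continuous_finset_sum _ fun j _ =>
        ((contDiff_pderiv' (contDiff_coord hγ j) i).continuous.mul
          (contDiff_pderiv' hf i).continuous).mul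
          (contDiff_pderiv' hf j).continuous).mul hP.continuous)
      (hcs_mul_right (hcs_sum _ _ fun i _ => hcs_sum _ _ fun j _ =>
        hcs_mul_left (hcs_pderiv' hfc j)))
  -- step 1 : split the integral
  have h1 : ∫ x, GammaI π γ f x * (π x * Real.exp (f x))
      = (-(1/2 : ℝ)) * (∫ x, (∑ i, γ x i * pderiv' (fun y => Gamma1 f f y) i x) * (π x * Real.exp (f x)))
        + ∫ x, genL π f x * ((∑ j, pderiv' f j x * γ x j) * (π x * Real.exp (f x))) := by
    have e1 : (fun x => GammaI π γ f x * (π x * Real.exp (f x)))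
        = fun x => (-(1/2 : ℝ)) * ((∑ i, γ x i * pderiv' (fun y => Gamma1 f f y) i x) * (π x * Real.exp (f x)))
          + genL π f x * ((∑ j, pderiv' f j x * γ x j) * (π x * Real.exp (f x))) := by
      funext x
      simp only [GammaI]
      ring
    rw [e1, integral_add (intA.const_mul _) intB, integral_const_mul]
  -- step 2 : stationarity applied to Gamma1
  have h2 : ∫ x, (∑ i, γ x i * pderiv' (fun y => Gamma1 f f y) i x) * (π x * Real.exp (f x))
      = -∫ x, Gamma1 f f x * ((∑ j, pderiv' f j x * γ x j) * (π x * Real.exp (f x))) :=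
    stat_ibp π hπ γ hγ hstat f hf (fun y => Gamma1 f f y) hG cG
  -- step 3 : generator identity
  have h3 : ∫ x, genL π f x * ((∑ j, pderiv' f j x * γ x j) * (π x * Real.exp (f x)))
      = (∫ x, (∑ i, pderiv' (fun y => (π y * Real.exp (f y)) * pderiv' f i y) i x) * (∑ j, pderiv' f j x * γ x j))
        - ∫ x, Gamma1 f f x * ((∑ j, pderiv' f j x * γ x j) * (π x * Real.exp (f x))) := by
    have e3 : (fun x => genL π f x * ((∑ j, pderiv' f j x * γ x j) * (π x * Real.exp (f x))))
        = fun x => (∑ i, pderiv' (fun y => (π y * Real.exp (f y)) * pderiv' f i y) i x) * (∑ j, pderiv' f j x * γ x j)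
          - Gamma1 f f x * ((∑ j, pderiv' f j x * γ x j) * (π x * Real.exp (f x))) := by
      funext x
      linear_combination (-(∑ j, pderiv' f j x * γ x j)) * egen x
    rw [e3, integral_sub intD intGphiP]
  -- step 4 : integration by parts on the divergence term
  have h4 : ∫ x, (∑ i, pderiv' (fun y => (π y * Real.exp (f y)) * pderiv' f i y) i x) * (∑ j, pderiv' f j x * γ x j)
      = -∫ x, (∑ i, pderiv' (fun y => ∑ j, pderiv' f j y * γ y j) i x * ((π x * Real.exp (f x)) * pderiv' f i x)) := by
    have e4 : (fun x => (∑ i, pderiv' (fun y => (π y * Real.exp (f y)) * pderiv' f i y) i x) * (∑ j, pderiv' f j x * γ x j))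
        = fun x => ∑ i, (∑ j, pderiv' f j x * γ x j) * pderiv' (fun y => (π y * Real.exp (f y)) * pderiv' f i y) i x := by
      funext x
      rw [Finset.sum_mul]
      exact Finset.sum_congr rfl fun i _ => by ring
    rw [e4, integral_finset_sum _ (fun i _ => intphiD i)]
    have e5 : ∀ i : Fin d, (∫ x, (∑ j, pderiv' f j x * γ x j) * pderiv' (fun y => (π y * Real.exp (f y)) * pderiv' f i y) i x)
        = -∫ x, pderiv' (fun y => ∑ j, pderiv' f j y * γ y j) i x * ((π x * Real.exp (f x)) * pderiv' f i x) :=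
      fun i => ibp hφ (hDv i) (cDv i) i
    rw [Finset.sum_congr rfl fun i _ => e5 i, Finset.sum_neg_distrib,
      ← integral_finset_sum _ (fun i _ => intdphi i)]
  -- step 5 : split the resulting integrand
  have h5 : ∫ x, (∑ i, pderiv' (fun y => ∑ j, pderiv' f j y * γ y j) i x * ((π x * Real.exp (f x)) * pderiv' f i x))
      = (∫ x, (∑ i, ∑ j, pderiv2 f i j x * γ x j * pderiv' f i x) * (π x * Real.exp (f x))) + ∫ x, (∑ i, ∑ j, pderiv' (fun y => γ y j) i x * pderiv' f i x * pderiv' f j x) * (π x * Real.exp (f x)) := by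
    have e6 : (fun x => ∑ i, pderiv' (fun y => ∑ j, pderiv' f j y * γ y j) i x * ((π x * Real.exp (f x)) * pderiv' f i x))
        = fun x => (∑ i, ∑ j, pderiv2 f i j x * γ x j * pderiv' f i x) * (π x * Real.exp (f x)) + (∑ i, ∑ j, pderiv' (fun y => γ y j) i x * pderiv' f i x * pderiv' f j x) * (π x * Real.exp (f x)) := by
      funext x
      simp only [ephi]
      calc ∑ i, (∑ j, (pderiv2 f i j x * γ x j + pderiv' f j x
              * pderiv' (fun y => γ y j) i x)) * ((π x * Real.exp (f x)) * pderiv' f i x)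
          = ∑ i, ((∑ j, pderiv2 f i j x * γ x j * pderiv' f i x) * (π x * Real.exp (f x))
              + (∑ j, pderiv' (fun y => γ y j) i x * pderiv' f i x * pderiv' f j x) * (π x * Real.exp (f x))) := by
            refine Finset.sum_congr rfl fun i _ => ?_
            rw [Finset.sum_mul, Finset.sum_mul, Finset.sum_mul, ← Finset.sum_add_distrib]
            refine Finset.sum_congr rfl fun j _ => ?_
            ring
        _ = (∑ i, ∑ j, pderiv2 f i j x * γ x j * pderiv' f i x) * (π x * Real.exp (f x)) + (∑ i, ∑ j, pderiv' (fun y => γ y j) i x * pderiv' f i x * pderiv' f j x) * (π x * Real.exp (f x)) := by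
            rw [Finset.sum_add_distrib, ← Finset.sum_mul, ← Finset.sum_mul]
    rw [e6, integral_add intK intT]
  -- step 6 : the K term via symmetry of the Hessian and stationarity
  have h6 : ∫ x, (∑ i, ∑ j, pderiv2 f i j x * γ x j * pderiv' f i x) * (π x * Real.exp (f x))
      = (1/2 : ℝ) * ∫ x, (∑ i, γ x i * pderiv' (fun y => Gamma1 f f y) i x) * (π x * Real.exp (f x)) := by
    have e7 : (fun x => (∑ i, γ x i * pderiv' (fun y => Gamma1 f f y) i x) * (π x * Real.exp (f x)))
        = fun x => 2 * ((∑ i, ∑ j, pderiv2 f i j x * γ x j * pderiv' f i x) * (π x * Real.exp (f x))) := by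
      funext x
      linear_combination (π x * Real.exp (f x)) * eHG x
    rw [e7, integral_const_mul]
    ring
  linarith [h1, h2, h3, h4, h5, h6]

end
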